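/- arXiv:1408.4709 — 4 statements merged into one kernel-verified Lean document; each statement's English description precedes it below -/
import Mathlib

section
/- Let q be an odd positive integer and in the complex Clifford algebra C_q let x = (1/2^((q-1)/2))·(e₁+e₂)(e₂+e₃)⋯(e_{q-1}+e_q). Then the coefficient of the identity element e_∅ in x² equals (-1)^((q²-1)/8) / 2^((q-1)/2). Equivalently, writing χ_∅ for the linear functional extracting the coefficient of e_∅, one has χ_∅(((e₁+e₂)⋯(e_{q-1}+e_q))²) = (−1)^((q²−1)/8) · 2^((q−1)/2). -/
set_option linter.unusedSectionVars false

/-- The complex Clifford algebra `C_n` on generators `e₁, …, e_n` with `e_j² = 1` and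
`e_j e_l = -e_l e_j` (`j ≠ l`). -/
noncomputable abbrev complexCliffordAlgebra (n : ℕ) :=
  CliffordAlgebra (QuadraticMap.weightedSumSquares ℂ (fun _ : Fin n => (1 : ℂ)))

/-- the `j`-th generator `e_j` of `C_n` -/
noncomputable abbrev cliffordGen (n : ℕ) (j : Fin n) : complexCliffordAlgebra n :=
  CliffordAlgebra.ι (QuadraticMap.weightedSumSquares ℂ (fun _ : Fin n => (1 : ℂ)))
    (Pi.single j 1)

/-- `e_I`: the ordered product of the generators `e_j`, `j ∈ I`. -/
noncomputable def cliffordBasisElem (n : ℕ) (I : Finset (Fin n)) : complexCliffordAlgebra n :=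
  ((I.sort (· ≤ ·)).map (fun j => cliffordGen n j)).prod

variable (q : ℕ)

private def sv (j : Fin q) : Fin q → ℂ := Pi.single j 1

lemma eps_sq (j : Fin q) : cliffordGen q j * cliffordGen q j = 1 := by
  rw [CliffordAlgebra.ι_sq_scalar]
  have : QuadraticMap.weightedSumSquares ℂ (fun _ : Fin q => (1 : ℂ)) (Pi.single j 1) = 1 := by
    rw [QuadraticMap.weightedSumSquares_apply]
    rw [Finset.sum_eq_single j]
    · simp
    · intro b _ hb; simp [Pi.single_eq_of_ne hb]
    · simp
  rw [this, map_one]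

lemma eps_swap {i j : Fin q} (h : i ≠ j) :
    cliffordGen q i * cliffordGen q j = -(cliffordGen q j * cliffordGen q i) := by
  have key := CliffordAlgebra.ι_mul_ι_add_swap (Q := QuadraticMap.weightedSumSquares ℂ
    (fun _ : Fin q => (1 : ℂ))) (Pi.single i 1) (Pi.single j 1)
  have hp : QuadraticMap.polar (⇑(QuadraticMap.weightedSumSquares ℂ (fun _ : Fin q => (1 : ℂ))))
      (Pi.single i (1:ℂ)) (Pi.single j 1) = 0 := by
    rw [QuadraticMap.polar]
    simp only [QuadraticMap.weightedSumSquares_apply, Pi.add_apply, smul_eq_mul, one_mul]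
    have hij : ∀ k : Fin q, ((sv q i k + sv q j k) * (sv q i k + sv q j k) : ℂ) =
        sv q i k * sv q i k + sv q j k * sv q j k := by
      intro k
      rcases eq_or_ne k i with rfl | hi
      · have : sv q j k = 0 := Pi.single_eq_of_ne (h) 1
        rw [this]; ring
      · have : sv q i k = 0 := Pi.single_eq_of_ne hi 1
        rw [this]; ring
    show (∑ k, (sv q i k + sv q j k) * (sv q i k + sv q j k))
        - (∑ k, sv q i k * sv q i k) - (∑ k, sv q j k * sv q j k) = 0
    simp only [hij]
    rw [Finset.sum_add_distrib]; ring
  rw [hp, map_zero] at key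
  exact eq_neg_of_add_eq_zero_left key


noncomputable def prodL (l : List (Fin q)) : complexCliffordAlgebra q :=
  (l.map (fun j => cliffordGen q j)).prod

lemma prodL_nil : prodL q [] = 1 := rfl
lemma prodL_cons (a : Fin q) (l : List (Fin q)) :
    prodL q (a :: l) = cliffordGen q a * prodL q l := by
  simp [prodL]

lemma gen_mul_prodL : ∀ (l : List (Fin q)), l.Pairwise (· < ·) → ∀ j : Fin q,
    ∃ (s : ℂ) (l' : List (Fin q)), (s = 1 ∨ s = -1) ∧ l'.Pairwise (· < ·) ∧
      (∀ x, x ∈ l' ↔ ((x ∈ l ∧ x ≠ j) ∨ (x = j ∧ x ∉ l))) ∧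
      cliffordGen q j * prodL q l = s • prodL q l' := by
  intro l
  induction l with
  | nil =>
    intro _ j
    refine ⟨1, [j], Or.inl rfl, List.pairwise_singleton _ j, ?_, by simp [prodL]⟩
    intro x; simp
  | cons a l IH =>
    intro hsort j
    rw [List.pairwise_cons] at hsort
    obtain ⟨ha, hl⟩ := hsort
    rcases lt_trichotomy j a with hja | hja | hja
    · have hjn : j ∉ a :: l := by
        intro hj
        rcases List.mem_cons.mp hj with rfl | hj
        · exact hja.ne rfl
        · exact absurd (ha j hj) hja.asymm
      refine ⟨1, j :: a :: l, Or.inl rfl, ?_, ?_, by rw [one_smul]; simp [prodL]⟩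
      · rw [List.pairwise_cons]
        refine ⟨?_, ?_⟩
        · intro b hb
          rcases List.mem_cons.mp hb with rfl | hb
          · exact hja
          · exact hja.trans (ha b hb)
        · rw [List.pairwise_cons]; exact ⟨ha, hl⟩
      · intro x
        by_cases hx : x = j
        · subst hx; simp [hjn]
        · simp only [List.mem_cons] at *
          constructor
          · rintro (rfl | hx') <;> tauto
          · tauto
    · subst hja
      have han : j ∉ l := fun hj => absurd (ha j hj) (lt_irrefl j)
      refine ⟨1, l, Or.inl rfl, hl, ?_, ?_⟩
      · intro x
        by_cases hx : x = j
        · subst hx; simp [han]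
        · simp only [List.mem_cons]
          constructor
          · intro hxl; exact Or.inl ⟨Or.inr hxl, hx⟩
          · rintro (⟨hx' | hx', hne⟩ | ⟨rfl, _⟩)
            · exact absurd hx' hx
            · exact hx'
            · exact absurd rfl hx
      · rw [prodL_cons, ← mul_assoc, eps_sq, one_mul, one_smul]
    · obtain ⟨s, l', hs, hsort', hmem, heq⟩ := IH hl j
      refine ⟨-s, a :: l', by rcases hs with rfl | rfl; · right; ring
                              · left; ring, ?_, ?_, ?_⟩
      · rw [List.pairwise_cons]
        refine ⟨?_, hsort'⟩
        intro b hb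
        rcases (hmem b).mp hb with ⟨hbl, _⟩ | ⟨rfl, _⟩
        · exact ha b hbl
        · exact hja
      · intro x
        simp only [List.mem_cons, hmem]
        by_cases hxa : x = a
        · subst hxa
          have h1 : x ≠ j := hja.ne
          have h2 : x ∉ l := fun hh => absurd (ha x hh) (lt_irrefl x)
          tauto
        · tauto
      · rw [prodL_cons, prodL_cons, ← mul_assoc, eps_swap q hja.ne', neg_mul, mul_assoc,
          heq, mul_smul_comm, neg_smul]

lemma gen_mul_basis (j : Fin q) (I : Finset (Fin q)) :
    ∃ (s : ℂ) (J : Finset (Fin q)), (s = 1 ∨ s = -1) ∧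
      (∀ x, x ∈ J ↔ ((x ∈ I ∧ x ≠ j) ∨ (x = j ∧ x ∉ I))) ∧
      cliffordGen q j * cliffordBasisElem q I = s • cliffordBasisElem q J := by
  obtain ⟨s, l', hs, hsort, hmem, heq⟩ :=
    gen_mul_prodL q (I.sort (· ≤ ·)) (List.sortedLT_iff_pairwise.mp (Finset.sortedLT_sort I)) j
  refine ⟨s, l'.toFinset, hs, ?_, ?_⟩
  · intro x
    rw [List.mem_toFinset, hmem]
    simp [Finset.mem_sort]
  · have hnd : l'.Nodup := hsort.nodup
    have hsl : l'.toFinset.sort (· ≤ ·) = l' := (List.toFinset_sort (r := (· ≤ ·)) hnd).mpr (hsort.imp le_of_lt)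
    show cliffordGen q j * prodL q (I.sort (· ≤ ·)) = s • prodL q (l'.toFinset.sort (· ≤ ·))
    rw [hsl]
    exact heq

noncomputable def Vm (m : Fin q) : Submodule ℂ (complexCliffordAlgebra q) :=
  Submodule.span ℂ {x | ∃ I : Finset (Fin q), m ∈ I ∧ x = cliffordBasisElem q I}

lemma basis_singleton (m : Fin q) : cliffordBasisElem q {m} = cliffordGen q m := by
  show prodL q (Finset.sort {m} (· ≤ ·)) = _
  rw [Finset.sort_singleton]
  simp [prodL]

lemma gen_mem_Vm (m : Fin q) : cliffordGen q m ∈ Vm q m := by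
  rw [← basis_singleton]
  exact Submodule.subset_span ⟨{m}, Finset.mem_singleton_self m, rfl⟩

lemma gen_mul_Vm {j m : Fin q} (hjm : j ≠ m) : ∀ x ∈ Vm q m, cliffordGen q j * x ∈ Vm q m := by
  intro x hx
  induction hx using Submodule.span_induction with
  | mem y hy =>
    obtain ⟨I, hmI, rfl⟩ := hy
    obtain ⟨s, J, _, hJ, heq⟩ := gen_mul_basis q j I
    rw [heq]
    exact Submodule.smul_mem _ _ (Submodule.subset_span
      ⟨J, (hJ m).mpr (Or.inl ⟨hmI, fun hh => hjm hh.symm⟩), rfl⟩)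
  | zero => rw [mul_zero]; exact Submodule.zero_mem _
  | add y z _ _ hy hz => rw [mul_add]; exact Submodule.add_mem _ hy hz
  | smul c y _ hy => rw [mul_smul_comm]; exact Submodule.smul_mem _ _ hy

lemma adjoin_mul_Vm {m : Fin q} {X : complexCliffordAlgebra q}
    (hX : X ∈ Algebra.adjoin ℂ {x | ∃ j : Fin q, (j : ℕ) < (m : ℕ) ∧ x = cliffordGen q j}) :
    ∀ v ∈ Vm q m, X * v ∈ Vm q m := by
  induction hX using Algebra.adjoin_induction with
  | mem y hy =>
    obtain ⟨j, hj, rfl⟩ := hy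
    exact gen_mul_Vm q (fun hh => absurd (congrArg (Fin.val) hh) hj.ne)
  | algebraMap r =>
    intro v hv
    rw [← Algebra.smul_def]
    exact Submodule.smul_mem _ _ hv
  | add y z _ _ hy hz => intro v hv; rw [add_mul]; exact Submodule.add_mem _ (hy v hv) (hz v hv)
  | mul y z _ _ hy hz => intro v hv; rw [mul_assoc]; exact hy _ (hz v hv)

section helpers
variable {A : Type*} [Ring A] [Algebra ℂ A]

lemma h1 (x y e : A) (s : ℂ) (hc : e * y = s • (y * e)) (he : e * e = 1) :
    (x * e) * (y * e) = s • (x * y) := by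
  calc (x * e) * (y * e) = x * ((e * y) * e) := by rw [mul_assoc, mul_assoc]
  _ = x * ((s • (y * e)) * e) := by rw [hc]
  _ = x * (s • (y * (e * e))) := by rw [smul_mul_assoc, mul_assoc]
  _ = s • (x * y) := by rw [he, mul_one, mul_smul_comm]

lemma h3 (x y e f : A) (s : ℂ) (hc : e * y = s • (y * e)) (hef : e * f = -(f * e)) :
    (x * e) * (y * f) = (-s) • (((x * y) * f) * e) := by
  calc (x * e) * (y * f) = x * (((e * y) * f)) := by rw [mul_assoc, mul_assoc]
  _ = x * ((s • (y * e)) * f) := by rw [hc]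
  _ = s • (x * (y * (e * f))) := by rw [smul_mul_assoc, mul_assoc, mul_smul_comm]
  _ = s • (x * (y * (-(f * e)))) := by rw [hef]
  _ = (-s) • (((x * y) * f) * e) := by
      rw [mul_neg, mul_neg, ← mul_assoc, ← mul_assoc, smul_neg, ← neg_smul]

lemma h4 (x y e : A) (s : ℂ) (hc : e * y = s • (y * e)) :
    (x * e) * y = s • ((x * y) * e) := by
  rw [mul_assoc, hc, mul_smul_comm, ← mul_assoc]

end helpers

variable [NeZero q]

noncomputable def An (n : ℕ) : complexCliffordAlgebra q :=
  if h : n + 1 < q then cliffordGen q ⟨n, by omega⟩ + cliffordGen q ⟨n + 1, h⟩ else 0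

noncomputable def Pn (n : ℕ) : complexCliffordAlgebra q :=
  ((List.range n).map (An q)).prod

noncomputable def En (n : ℕ) : complexCliffordAlgebra q :=
  if h : n < q then cliffordGen q ⟨n, h⟩ else 0

noncomputable def Qn (n : ℕ) : complexCliffordAlgebra q := Pn q n * En q n

lemma Pn_zero : Pn q 0 = 1 := rfl

lemma Pn_succ (n : ℕ) : Pn q (n + 1) = Pn q n * An q n := by
  rw [Pn, Pn, List.range_succ, List.map_append, List.prod_append]
  simp

abbrev genSet (m : Fin q) : Set (complexCliffordAlgebra q) :=
  {x | ∃ j : Fin q, (j : ℕ) < (m : ℕ) ∧ x = cliffordGen q j}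

lemma gen_mem_adjoin {j m : Fin q} (h : (j : ℕ) < (m : ℕ)) :
    cliffordGen q j ∈ Algebra.adjoin ℂ (genSet q m) :=
  Algebra.subset_adjoin ⟨j, h, rfl⟩

lemma Pn_mem_adjoin : ∀ n (m : Fin q), n < (m : ℕ) → Pn q n ∈ Algebra.adjoin ℂ (genSet q m) := by
  intro n
  induction n with
  | zero => intro m _; rw [Pn_zero]; exact Subalgebra.one_mem _
  | succ n IH =>
    intro m hm
    rw [Pn_succ]
    refine Subalgebra.mul_mem _ (IH m (by omega)) ?_
    rw [An, dif_pos (by omega : n + 1 < q)]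
    exact Subalgebra.add_mem _ (gen_mem_adjoin q (by simpa using by omega))
      (gen_mem_adjoin q (by simpa using hm))

lemma En_mem_adjoin {n : ℕ} {m : Fin q} (h : n < (m : ℕ)) :
    En q n ∈ Algebra.adjoin ℂ (genSet q m) := by
  rw [En, dif_pos (lt_trans h m.isLt)]
  exact gen_mem_adjoin q (by simpa using h)

lemma comm_Pn : ∀ n (m : Fin q), n < (m : ℕ) →
    cliffordGen q m * Pn q n = ((-1 : ℂ) ^ n) • (Pn q n * cliffordGen q m) := by
  intro n
  induction n with
  | zero => intro m _; rw [Pn_zero, pow_zero, one_smul, one_mul, mul_one]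
  | succ n IH =>
    intro m hm
    have hq1 : n + 1 < q := by omega
    have h1 : cliffordGen q m * An q n = -(An q n * cliffordGen q m) := by
      rw [An, dif_pos hq1, mul_add, add_mul]
      have hne1 : m ≠ (⟨n, by omega⟩ : Fin q) := by
        intro hh; have := congrArg Fin.val hh; simp at this; omega
      have hne2 : m ≠ (⟨n + 1, hq1⟩ : Fin q) := by
        intro hh; have := congrArg Fin.val hh; simp at this; omega
      rw [eps_swap q hne1, eps_swap q hne2, neg_add]
    rw [Pn_succ, ← mul_assoc, IH m (by omega), smul_mul_assoc, mul_assoc, h1, mul_neg,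
      ← mul_assoc, pow_succ, mul_comm ((-1:ℂ)^n) (-1), ← smul_smul, neg_one_smul, smul_neg]

variable (χ₀ : complexCliffordAlgebra q →ₗ[ℂ] ℂ)
variable (hχ₀ : ∀ I : Finset (Fin q), I.Nonempty → χ₀ (cliffordBasisElem q I) = 0)

include hχ₀

lemma chi_Vm {m : Fin q} {x} (hx : x ∈ Vm q m) : χ₀ x = 0 := by
  induction hx using Submodule.span_induction with
  | mem y hy => obtain ⟨I, hmI, rfl⟩ := hy; exact hχ₀ I ⟨m, hmI⟩
  | zero => exact map_zero _
  | add y z _ _ hy hz => rw [map_add, hy, hz, add_zero]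
  | smul c y _ hy => rw [map_smul, hy, smul_zero]

lemma chi_mul_gen {m : Fin q} {X} (hX : X ∈ Algebra.adjoin ℂ (genSet q m)) :
    χ₀ (X * cliffordGen q m) = 0 :=
  chi_Vm q χ₀ hχ₀ (adjoin_mul_Vm q hX _ (gen_mem_Vm q m))

omit hχ₀

lemma comm_Qn {n : ℕ} (hn : n + 2 ≤ q) :
    cliffordGen q ⟨n + 1, by omega⟩ * Qn q n =
      ((-1 : ℂ) ^ (n + 1)) • (Qn q n * cliffordGen q ⟨n + 1, by omega⟩) := by
  set m : Fin q := ⟨n + 1, by omega⟩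
  set en : Fin q := ⟨n, by omega⟩
  have hE : En q n = cliffordGen q en := by rw [En, dif_pos (by omega : n < q)]
  have hne : m ≠ en := by intro hh; have := congrArg Fin.val hh; simp [m, en] at this
  rw [Qn, hE, ← mul_assoc, comm_Pn q n m (by simp [m]), smul_mul_assoc, mul_assoc,
    eps_swap q hne, mul_neg, ← mul_assoc, pow_succ, mul_comm ((-1:ℂ)^n) (-1), ← smul_smul,
    neg_one_smul, smul_neg]

include hχ₀

lemma R1 {n : ℕ} (hn : n + 2 ≤ q) :
    χ₀ (Pn q (n + 1) * Pn q (n + 1)) =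
      (-1 : ℂ) ^ n * χ₀ (Pn q n * Pn q n) + χ₀ (Qn q n * Qn q n) := by
  set m : Fin q := ⟨n + 1, by omega⟩
  set en : Fin q := ⟨n, by omega⟩
  set P := Pn q n
  set e := cliffordGen q en
  set f := cliffordGen q m
  have hnm : n < (m : ℕ) := by simp [m]
  have henm : (en : ℕ) < (m : ℕ) := by simp [m, en]
  have hne : m ≠ en := by intro hh; have := congrArg Fin.val hh; simp [m, en] at this
  have hPs : Pn q (n + 1) = P * e + P * f := by
    rw [Pn_succ, An, dif_pos (by omega : n + 1 < q), mul_add]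
  have hQ : Qn q n = P * e := by rw [Qn, En, dif_pos (by omega : n < q)]
  have hmemP : P ∈ Algebra.adjoin ℂ (genSet q m) := Pn_mem_adjoin q n m hnm
  have hmeme : e ∈ Algebra.adjoin ℂ (genSet q m) := gen_mem_adjoin q henm
  have hT2 : χ₀ ((P * e) * (P * f)) = 0 := by
    rw [← mul_assoc]
    exact chi_mul_gen q χ₀ hχ₀ (Subalgebra.mul_mem _ (Subalgebra.mul_mem _ hmemP hmeme) hmemP)
  have hT3 : χ₀ ((P * f) * (P * e)) = 0 := by
    rw [h3 P P f e ((-1:ℂ)^n) (comm_Pn q n m hnm) (eps_swap q hne), map_smul, smul_eq_mul]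
    rw [chi_mul_gen q χ₀ hχ₀ (Subalgebra.mul_mem _ (Subalgebra.mul_mem _ hmemP hmemP) hmeme),
      mul_zero]
  have hT4 : (P * f) * (P * f) = ((-1:ℂ)^n) • (P * P) :=
    h1 P P f ((-1:ℂ)^n) (comm_Pn q n m hnm) (eps_sq q m)
  rw [hPs, add_mul, mul_add, mul_add, hQ, map_add, map_add, map_add, hT2, hT3, hT4, map_smul,
    smul_eq_mul]
  ring

lemma R2 {n : ℕ} (hn : n + 2 ≤ q) :
    χ₀ (Qn q (n + 1) * Qn q (n + 1)) =
      (-1 : ℂ) ^ (n + 1) * χ₀ (Qn q n * Qn q n) + χ₀ (Pn q n * Pn q n) := by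
  set m : Fin q := ⟨n + 1, by omega⟩
  set en : Fin q := ⟨n, by omega⟩
  set P := Pn q n
  set Qq := Qn q n
  set e := cliffordGen q en
  set f := cliffordGen q m
  have hnm : n < (m : ℕ) := by simp [m]
  have henm : (en : ℕ) < (m : ℕ) := by simp [m, en]
  have hQ : Qq = P * e := by
    show Qn q n = P * e
    rw [Qn, En, dif_pos (by omega : n < q)]
  have hmemP : P ∈ Algebra.adjoin ℂ (genSet q m) := Pn_mem_adjoin q n m hnm
  have hmeme : e ∈ Algebra.adjoin ℂ (genSet q m) := gen_mem_adjoin q henm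
  have hmemQ : Qq ∈ Algebra.adjoin ℂ (genSet q m) := by
    rw [hQ]; exact Subalgebra.mul_mem _ hmemP hmeme
  have hAn : An q n = e + f := by rw [An, dif_pos (by omega : n + 1 < q)]
  have hEn1 : En q (n + 1) = f := by rw [En, dif_pos (by omega : n + 1 < q)]
  have hQs : Qn q (n + 1) = Qq * f + P := by
    show Pn q (n + 1) * En q (n + 1) = Qq * f + P
    rw [Pn_succ, hAn, hEn1, mul_add, add_mul, mul_assoc P f f, eps_sq, mul_one, ← hQ]
  have hT1 : (Qq * f) * (Qq * f) = ((-1:ℂ)^(n+1)) • (Qq * Qq) :=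
    h1 Qq Qq f ((-1:ℂ)^(n+1)) (comm_Qn q hn) (eps_sq q m)
  have hT2 : χ₀ ((Qq * f) * P) = 0 := by
    rw [h4 Qq P f ((-1:ℂ)^n) (comm_Pn q n m hnm), map_smul, smul_eq_mul,
      chi_mul_gen q χ₀ hχ₀ (Subalgebra.mul_mem _ hmemQ hmemP), mul_zero]
  have hT3 : χ₀ (P * (Qq * f)) = 0 := by
    rw [← mul_assoc]
    exact chi_mul_gen q χ₀ hχ₀ (Subalgebra.mul_mem _ hmemP hmemQ)
  rw [hQs, add_mul, mul_add, mul_add, map_add, map_add, map_add, hT1, hT2, hT3, map_smul,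
    smul_eq_mul]
  ring

lemma closed_form : ∀ k : ℕ, 2 * k + 1 ≤ q → (χ₀ 1 = 1) →
    χ₀ (Pn q (2 * k) * Pn q (2 * k)) = (-1 : ℂ) ^ (k * (k + 1) / 2) * 2 ^ k ∧
    χ₀ (Qn q (2 * k) * Qn q (2 * k)) = (-1 : ℂ) ^ (k * (k - 1) / 2) * 2 ^ k := by
  intro k
  induction k with
  | zero =>
    intro h h1
    norm_num
    constructor
    · rw [Pn_zero, one_mul]; exact h1
    · have hE : En q 0 = cliffordGen q ⟨0, by omega⟩ := by rw [En, dif_pos (by omega : 0 < q)]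
      rw [Qn, Pn_zero, one_mul, hE, eps_sq]; exact h1
  | succ k IH =>
    intro hk h1
    obtain ⟨ht, hs⟩ := IH (by omega) h1
    have e1 : 2 * k + 2 ≤ q := by omega
    have e2 : (2 * k + 1) + 2 ≤ q := by omega
    have t1 := R1 q χ₀ hχ₀ (n := 2 * k) e1
    have s1 := R2 q χ₀ hχ₀ (n := 2 * k) e1
    have t2 := R1 q χ₀ hχ₀ (n := 2 * k + 1) e2
    have s2 := R2 q χ₀ hχ₀ (n := 2 * k + 1) e2
    have hev : (-1 : ℂ) ^ (2 * k) = 1 := by rw [pow_mul]; norm_num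
    have hod : (-1 : ℂ) ^ (2 * k + 1) = -1 := by rw [pow_succ, hev, one_mul]
    have hev2 : (-1 : ℂ) ^ (2 * k + 1 + 1) = 1 := by rw [pow_succ, hod]; norm_num
    rw [hev, one_mul] at t1
    rw [hod] at s1
    rw [hod] at t2
    rw [hev2, one_mul] at s2
    have h2k2 : 2 * (k + 1) = (2 * k + 1) + 1 := by omega
    have hT : χ₀ (Pn q (2 * (k + 1)) * Pn q (2 * (k + 1))) =
        -2 * ((-1 : ℂ) ^ (k * (k - 1) / 2) * 2 ^ k) := by
      rw [h2k2, t2, t1, s1, ht, hs]; ring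
    have hS : χ₀ (Qn q (2 * (k + 1)) * Qn q (2 * (k + 1))) =
        2 * ((-1 : ℂ) ^ (k * (k + 1) / 2) * 2 ^ k) := by
      rw [h2k2, s2, t1, s1, ht, hs]; ring
    have heven : k * (k - 1) % 2 = 0 := by
      rcases Nat.even_or_odd k with h | h
      · obtain ⟨c, hc⟩ := h
        subst hc
        have : (c + c) * (c + c - 1) = 2 * (c * (c + c - 1)) := by ring
        omega
      · have : Even (k - 1) := Nat.Odd.sub_odd h odd_one
        obtain ⟨c, hc⟩ := this
        rcases Nat.eq_zero_or_pos k with rfl | hkpos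
        · simp
        · have : k * (k - 1) = 2 * (k * c) := by rw [hc]; ring
          omega
    have hmul : (k + 1) * (k + 2) = k * (k - 1) + (4 * k + 2) := by
      cases k with
      | zero => norm_num
      | succ m => simp [Nat.succ_sub_one]; ring
    have hexp : (k + 1) * (k + 2) / 2 = k * (k - 1) / 2 + (2 * k + 1) := by omega
    constructor
    · rw [hT]
      have : (k + 1) * ((k + 1) + 1) = (k + 1) * (k + 2) := by ring
      rw [this, hexp, pow_add, hod]
      ring
    · rw [hS]
      have : (k + 1) * ((k + 1) - 1) = k * (k + 1) := by
        rw [Nat.succ_sub_one]; ring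
      rw [this]
      ring


omit hχ₀

set_option maxHeartbeats 2000000 in
/-- Let `q` be an odd positive integer and, in the complex Clifford algebra `C_q`, let
`x = (1/2^((q-1)/2))·(e₁+e₂)(e₂+e₃)⋯(e_{q-1}+e_q)`.  Then the coefficient of `e_∅` in `x²`
is `(-1)^((q²-1)/8)/2^((q-1)/2)`; equivalently, writing `χ_∅` for the linear functional
extracting the coefficient of `e_∅` (characterized by `χ_∅(e_∅) = 1` and `χ_∅(e_I) = 0` for
`I ≠ ∅`), one has `χ_∅(((e₁+e₂)⋯(e_{q-1}+e_q))²) = (-1)^((q²-1)/8)·2^((q-1)/2)`. -/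
theorem stmt_9 (q : ℕ) [NeZero q] (hq : Odd q)
    (χ₀ : complexCliffordAlgebra q →ₗ[ℂ] ℂ)
    (hχ₀_one : χ₀ 1 = 1)
    (hχ₀ : ∀ I : Finset (Fin q), I.Nonempty → χ₀ (cliffordBasisElem q I) = 0) :
    χ₀ ((List.ofFn (fun j : Fin (q - 1) =>
          cliffordGen q ⟨(j : ℕ), by omega⟩ + cliffordGen q ⟨(j : ℕ) + 1, by omega⟩)).prod
        * (List.ofFn (fun j : Fin (q - 1) =>
          cliffordGen q ⟨(j : ℕ), by omega⟩ + cliffordGen q ⟨(j : ℕ) + 1, by omega⟩)).prod)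
      = (-1 : ℂ) ^ ((q ^ 2 - 1) / 8) * 2 ^ ((q - 1) / 2) := by
  obtain ⟨k, hk⟩ := hq
  have hq1 : 1 ≤ q := Nat.one_le_iff_ne_zero.mpr (NeZero.ne q)
  have hlist : (List.ofFn (fun j : Fin (q - 1) =>
      cliffordGen q ⟨(j : ℕ), by omega⟩ + cliffordGen q ⟨(j : ℕ) + 1, by omega⟩))
      = (List.range (q - 1)).map (An q) := by
    apply List.ext_getElem
    · simp
    · intro i h1 h2
      simp only [List.getElem_ofFn, List.getElem_map, List.getElem_range]
      have hi : i < q - 1 := by simpa using h2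
      rw [An, dif_pos (by omega : i + 1 < q)]
  rw [hlist]
  have hPn : ((List.range (q - 1)).map (An q)).prod = Pn q (q - 1) := rfl
  rw [hPn]
  have hq2k : q - 1 = 2 * k := by omega
  have hcf := (closed_form q χ₀ hχ₀ k (by omega) hχ₀_one).1
  rw [hq2k, hcf]
  have hkk : (q - 1) / 2 = k := by omega
  have hkexp : (q ^ 2 - 1) / 8 = k * (k + 1) / 2 := by
    have h2 : q ^ 2 = 4 * (k * (k + 1)) + 1 := by subst hk; ring
    have he : Even (k * (k + 1)) := Nat.even_mul_succ_self k
    obtain ⟨c, hc⟩ := he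
    omega
  have h22 : 2 * k / 2 = k := by omega
  rw [h22, hkexp]
end

section
/- Let λ be a partition of n and q a positive integer. If μ is obtained from λ by removing a q-hook b, then (−1)^{L(b)} = δ_q(λ)·δ_q(μ), where L(b) is the leg length of the hook b and δ_q denotes the q-sign of a partition. -/
/-- Inversion count: pairs `x < y` in `B` with `y % q < x % q`. -/
def Nq (q : ℕ) (B : Finset ℕ) : ℕ :=
  ∑ x ∈ B, (B.filter fun y => x < y ∧ y % q < x % q).card

lemma Nq_insert (q a : ℕ) (C : Finset ℕ) (ha : a ∉ C) :
    Nq q (insert a C) = Nq q C + (C.filter fun x => x < a ∧ a % q < x % q).card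
      + (C.filter fun y => a < y ∧ y % q < a % q).card := by
  unfold Nq
  rw [Finset.sum_insert ha]
  have h1 : ((insert a C).filter fun y => a < y ∧ y % q < a % q)
      = C.filter fun y => a < y ∧ y % q < a % q := by
    rw [Finset.filter_insert, if_neg (by simp)]
  have h2 : ∀ x ∈ C, ((insert a C).filter fun y => x < y ∧ y % q < x % q).card
      = (C.filter fun y => x < y ∧ y % q < x % q).card
        + (if x < a ∧ a % q < x % q then 1 else 0) := by
    intro x hx
    rw [Finset.filter_insert]
    split_ifs with hcond
    · rw [Finset.card_insert_of_notMem (fun hmem => ha (Finset.mem_filter.mp hmem).1)]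
    · simp
  rw [h1, Finset.sum_congr rfl h2, Finset.sum_add_distrib, ← Finset.card_filter]
  ring

lemma neg_one_pow_helper (a b c : ℕ) (h : Even (a + b + c)) :
    ((-1 : ℤ)) ^ a = (-1) ^ b * (-1) ^ c := by
  rw [← pow_add]
  rcases Nat.even_or_odd a with ha | ha
  · have hbc : Even (b + c) := by
      rw [Nat.even_iff] at *; omega
    rw [ha.neg_one_pow, hbc.neg_one_pow]
  · have hbc : Odd (b + c) := by
      rw [Nat.even_iff] at h; rw [Nat.odd_iff] at *; omega
    rw [ha.neg_one_pow, hbc.neg_one_pow]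

/-- **Leg lengths of `q`-hooks and the `q`-sign.**
Partitions are encoded by their beta-sets (first-column hook lengths): a finite set
`B ⊆ ℕ`.  Removing a `q`-hook from the partition corresponds to replacing some `h ∈ B`
with `h ≥ q` and `h - q ∉ B` by `h - q`; the leg length `L(b)` of the removed hook is the
number of elements of `B` strictly between `h - q` and `h`.

The statement: there is a sign function `δ_q` on partitions (the `q`-sign) such that
whenever `μ` is obtained from `λ` by removing a `q`-hook `b`, one has
`(-1)^{L(b)} = δ_q(λ)·δ_q(μ)`. -/
theorem stmt_10 (q : ℕ) (hq : 0 < q) :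
    ∃ δ : Finset ℕ → ℤ, (∀ B, δ B = 1 ∨ δ B = -1) ∧
      ∀ (B : Finset ℕ) (h : ℕ), h ∈ B → q ≤ h → h - q ∉ B →
        (-1 : ℤ) ^ (B.filter (fun x => h - q < x ∧ x < h)).card
          = δ B * δ (insert (h - q) (B.erase h)) := by
  refine ⟨fun B => (-1) ^ Nq q B, fun B => (Nat.even_or_odd (Nq q B)).imp
    Even.neg_one_pow Odd.neg_one_pow, ?_⟩
  intro B h hmem hqh hnot
  set C := B.erase h with hCdef
  have hB : insert h C = B := Finset.insert_erase hmem
  have hhC : h ∉ C := Finset.notMem_erase h B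
  have hh'C : h - q ∉ C := fun hx => hnot (Finset.mem_of_mem_erase hx)
  -- residue fact: no element strictly between h-q and h has the same residue as h
  have hres : ∀ x : ℕ, h - q < x → x < h → x % q ≠ h % q := by
    intro x hx1 hx2 hxr
    have hd : q ∣ h - x := (Nat.modEq_iff_dvd' hx2.le).mp hxr
    have := Nat.le_of_dvd (by omega) hd
    omega
  -- leg length over B equals over C
  have hL : (B.filter (fun x => h - q < x ∧ x < h)).card
      = (C.filter (fun x => h - q < x ∧ x < h)).card := by
    rw [← hB, Finset.filter_insert, if_neg (by omega)]
  have hNB : Nq q B = Nq q C + (C.filter fun x => x < h ∧ h % q < x % q).card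
      + (C.filter fun y => h < y ∧ y % q < h % q).card := by
    rw [← hB]; exact Nq_insert q h C hhC
  have hr' : (h - q) % q = h % q := (Nat.mod_eq_sub_mod hqh).symm
  have hNB' : Nq q (insert (h - q) C) = Nq q C
      + (C.filter fun x => x < h - q ∧ h % q < x % q).card
      + (C.filter fun y => h - q < y ∧ y % q < h % q).card := by
    rw [Nq_insert q (h - q) C hh'C, hr']
  dsimp only
  rw [hL, hNB, hNB']
  apply neg_one_pow_helper
  -- reduce to evenness of a pointwise sum over C
  have key : Even ((C.filter (fun x => h - q < x ∧ x < h)).card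
      + (C.filter fun x => x < h ∧ h % q < x % q).card
      + (C.filter fun y => h < y ∧ y % q < h % q).card
      + (C.filter fun x => x < h - q ∧ h % q < x % q).card
      + (C.filter fun y => h - q < y ∧ y % q < h % q).card) := by
    rw [Finset.card_filter, Finset.card_filter, Finset.card_filter,
      Finset.card_filter, Finset.card_filter, ← Finset.sum_add_distrib,
      ← Finset.sum_add_distrib, ← Finset.sum_add_distrib, ← Finset.sum_add_distrib]
    apply Finset.even_sum
    intro x hx
    rw [Nat.even_iff]
    have hxh' : x ≠ h - q := fun hxe => hh'C (hxe ▸ hx)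
    have hxh : x ≠ h := fun hxe => hhC (hxe ▸ hx)
    have hne : h - q < x → x < h → x % q ≠ h % q := hres x
    by_cases h1 : h - q < x
    · by_cases h2 : x < h
      · have hne' : x % q ≠ h % q := hne h1 h2
        simp only [ite_and]
        split_ifs <;> omega
      · simp only [ite_and]
        split_ifs <;> omega
    · simp only [ite_and]
      split_ifs <;> omega
  obtain ⟨k, hk⟩ := key
  exact ⟨k + Nq q C, by omega⟩
end

section
/- Let λ be a partition of n into distinct parts and q an odd positive integer. If μ is obtained from λ by removing a q-bar b, then (−1)^{L(b)} = δ_q̄(λ)·δ_q̄(μ), where L(b) is the leg length of the q-bar and δ_q̄ denotes the q̄-sign. -/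
namespace Stmt11Aux

def cls (q x : ℕ) : ℕ := min (x % q) (q - x % q)

/-- pairwise weight, intended for `u < v` -/
def tt (q u v : ℕ) : ℕ :=
  if cls q u = cls q v then (if q < 2 * (v % q) then 1 else 0)
  else if cls q v < cls q u then 1 else 0

def T (q a b : ℕ) : ℕ := tt q (min a b) (max a b)

def f (q : ℕ) (X : Finset ℕ) : ℕ :=
  ∑ v ∈ X, ∑ u ∈ X.filter (fun u => u < v), tt q u v

lemma T_lt {q a b : ℕ} (h : a < b) : T q a b = tt q a b := by
  unfold T; rw [min_eq_left h.le, max_eq_right h.le]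

lemma T_gt {q a b : ℕ} (h : b < a) : T q a b = tt q b a := by
  unfold T; rw [min_eq_right h.le, max_eq_left h.le]

lemma pow_par {a b : ℕ} (h : a % 2 = b % 2) : (-1 : ℤ) ^ a = (-1 : ℤ) ^ b := by
  rcases Nat.even_or_odd a with he | ho
  · have hb : Even b := Nat.even_iff.mpr (by rw [← h]; exact Nat.even_iff.mp he)
    rw [he.neg_one_pow, hb.neg_one_pow]
  · have hb : Odd b := Nat.odd_iff.mpr (by rw [← h]; exact Nat.odd_iff.mp ho)
    rw [ho.neg_one_pow, hb.neg_one_pow]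

lemma pow_sum_congr (s : Finset ℕ) (f g : ℕ → ℕ)
    (h : ∀ z ∈ s, (-1 : ℤ) ^ (f z) = (-1 : ℤ) ^ (g z)) :
    (-1 : ℤ) ^ (∑ z ∈ s, f z) = (-1 : ℤ) ^ (∑ z ∈ s, g z) := by
  induction s using Finset.cons_induction with
  | empty => rfl
  | cons a s ha ih =>
      rw [Finset.sum_cons, Finset.sum_cons, pow_add, pow_add,
        h a (Finset.mem_cons_self a s), ih (fun z hz => h z (Finset.mem_cons_of_mem hz))]

lemma mod_sub_self {q x : ℕ} (h : q ≤ x) : (x - q) % q = x % q := by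
  conv_rhs => rw [← Nat.sub_add_cancel h]
  rw [Nat.add_mod_right]

lemma cls_sub {q x : ℕ} (h : q ≤ x) : cls q (x - q) = cls q x := by
  unfold cls; rw [mod_sub_self h]

lemma between_mod_ne {q x z : ℕ} (h1 : x - q < z) (h2 : z < x) (hne : z ≠ x - q)
    (hqx : q ≤ x) : z % q ≠ x % q := by
  intro h
  have hmod : z ≡ x [MOD q] := h
  have hd : q ∣ x - z := (Nat.modEq_iff_dvd' h2.le).mp hmod
  have hle : q ≤ x - z := Nat.le_of_dvd (by omega) hd
  omega

lemma cls_eq_resid {q x z : ℕ} (hq0 : 0 < q) (hc : cls q z = cls q x)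
    (hne : z % q ≠ x % q) : z % q + x % q = q := by
  have h1 : z % q < q := Nat.mod_lt _ hq0
  have h2 : x % q < q := Nat.mod_lt _ hq0
  unfold cls at hc
  omega

lemma pointA {q x z : ℕ} (hq : Odd q) (hq0 : 0 < q) (hx : q < x)
    (hzx : z ≠ x) (hzq : z ≠ x - q) :
    (-1 : ℤ) ^ (T q z x + T q z (x - q))
      = (-1) ^ (if x - q < z ∧ z < x then 1 else 0) := by
  have hqx : q ≤ x := hx.le
  rcases lt_trichotomy z x with hlt | heq | hgt
  · rcases lt_trichotomy z (x - q) with hlt2 | heq2 | hgt2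
    · -- z < x - q < x
      rw [T_lt hlt, T_lt hlt2]
      have he : tt q z (x - q) = tt q z x := by
        unfold tt; rw [cls_sub hqx, mod_sub_self hqx]
      rw [he, if_neg (by omega)]
      exact pow_par (by omega)
    · exact absurd heq2 hzq
    · -- x - q < z < x
      rw [T_lt hlt, T_gt hgt2, if_pos ⟨hgt2, hlt⟩]
      by_cases hc : cls q z = cls q x
      · have hne := between_mod_ne hgt2 hlt hzq hqx
        have hsum := cls_eq_resid hq0 hc hne
        have e1 : tt q z x = if q < 2 * (x % q) then 1 else 0 := by
          unfold tt; rw [if_pos hc]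
        have e2 : tt q (x - q) z = if q < 2 * (z % q) then 1 else 0 := by
          unfold tt; rw [cls_sub hqx, if_pos hc.symm]
        rw [e1, e2]
        obtain ⟨k, hk⟩ := hq
        have hxr : x % q < q := Nat.mod_lt _ hq0
        have hzr : z % q < q := Nat.mod_lt _ hq0
        generalize hA : x % q = a at hsum hxr ⊢
        generalize hB : z % q = b at hsum hzr ⊢
        split_ifs <;> first | (exfalso; omega) | norm_num
      · have e1 : tt q z x = if cls q x < cls q z then 1 else 0 := by
          unfold tt; rw [if_neg hc]
        have e2 : tt q (x - q) z = if cls q z < cls q x then 1 else 0 := by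
          unfold tt; rw [cls_sub hqx, if_neg (fun h => hc h.symm)]
        rw [e1, e2]
        have hne' : cls q x ≠ cls q z := fun h => hc h.symm
        split_ifs <;> first | (exfalso; omega) | norm_num
  · exact absurd heq hzx
  · -- z > x
    rw [T_gt hgt, T_gt (show x - q < z by omega)]
    have he : tt q (x - q) z = tt q x z := by
      unfold tt; rw [cls_sub hqx]
    rw [he, if_neg (by omega)]
    exact pow_par (by omega)

lemma pointB {q z : ℕ} (hq0 : 0 < q) (hz0 : 0 < z) (hzq : z ≠ q) :
    T q z q = if z < q then 1 else 0 := by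
  have hqq : q % q = 0 := Nat.mod_self q
  rcases lt_trichotomy z q with hlt | heq | hgt
  · rw [T_lt hlt]
    have hz : z % q = z := Nat.mod_eq_of_lt hlt
    unfold tt cls
    rw [hqq, hz]
    split_ifs <;> omega
  · exact absurd heq hzq
  · rw [T_gt hgt]
    have hb : z % q < q := Nat.mod_lt _ hq0
    unfold tt cls
    rw [hqq]
    generalize hB : z % q = b at hb ⊢
    split_ifs <;> omega

lemma pointC1 {q x y : ℕ} (hy0 : 0 < y) (hyx : y < x) (hxy : x + y = q) :
    T q y x = 1 := by
  rw [T_lt hyx]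
  unfold tt cls
  rw [Nat.mod_eq_of_lt (show x < q by omega), Nat.mod_eq_of_lt (show y < q by omega)]
  split_ifs <;> omega

lemma pointC2 {q x y z : ℕ} (hy0 : 0 < y) (hyx : y < x) (hxy : x + y = q)
    (hzx : z ≠ x) (hzy : z ≠ y) :
    (-1 : ℤ) ^ (T q z x + T q z y)
      = (-1) ^ ((if z < x then 1 else 0) + (if z < y then 1 else 0)) := by
  have hxq : x < q := by omega
  have hcx : cls q x = y := by
    unfold cls; rw [Nat.mod_eq_of_lt hxq]; omega
  have hcy : cls q y = y := by
    unfold cls; rw [Nat.mod_eq_of_lt (show y < q by omega)]; omega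
  rcases lt_trichotomy z x with hlt | heq | hgt
  · have hz : z % q = z := Nat.mod_eq_of_lt (by omega)
    rcases lt_trichotomy z y with hlt2 | heq2 | hgt2
    · -- z < y
      rw [T_lt hlt, T_lt hlt2]
      have hcz : cls q z = z := by unfold cls; rw [hz]; omega
      have e1 : tt q z x = 0 := by
        unfold tt; rw [hcz, hcx, Nat.mod_eq_of_lt hxq]
        split_ifs <;> omega
      have e2 : tt q z y = 0 := by
        unfold tt; rw [hcz, hcy, Nat.mod_eq_of_lt (show y < q by omega)]
        split_ifs <;> omega
      rw [e1, e2, if_pos hlt, if_pos hlt2]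
      norm_num
    · exact absurd heq2 hzy
    · -- y < z < x
      rw [T_lt hlt, T_gt hgt2]
      have hcz : cls q z ≠ y := by unfold cls; rw [hz]; omega
      have e1 : tt q z x = if y < cls q z then 1 else 0 := by
        unfold tt; rw [hcx, if_neg hcz]
      have e2 : tt q y z = if cls q z < y then 1 else 0 := by
        unfold tt; rw [hcy, if_neg (fun h => hcz h.symm)]
      rw [e1, e2, if_pos hlt, if_neg (show ¬ z < y by omega)]
      split_ifs <;> first | (exfalso; omega) | norm_num
  · exact absurd heq hzx
  · -- z > x > y
    rw [T_gt hgt, T_gt (show y < z by omega)]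
    have he : tt q y z = tt q x z := by unfold tt; rw [hcx, hcy]
    rw [he, if_neg (by omega), if_neg (by omega)]
    exact pow_par (by omega)

lemma f_insert (q a : ℕ) (X : Finset ℕ) (ha : a ∉ X) :
    f q (insert a X) = f q X + ∑ z ∈ X, T q z a := by
  unfold f
  rw [Finset.sum_insert ha]
  have h1 : Finset.filter (fun u => u < a) (insert a X)
      = Finset.filter (fun u => u < a) X := by
    rw [Finset.filter_insert, if_neg (lt_irrefl a)]
  have h2 : ∀ v ∈ X, (∑ u ∈ Finset.filter (fun u => u < v) (insert a X), tt q u v)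
      = (if a < v then tt q a v else 0)
        + ∑ u ∈ Finset.filter (fun u => u < v) X, tt q u v := by
    intro v hv
    rw [Finset.filter_insert]
    split_ifs with h
    · rw [Finset.sum_insert (fun hmem => ha (Finset.mem_of_mem_filter a hmem))]
    · rw [zero_add]
  rw [h1, Finset.sum_congr rfl h2, Finset.sum_add_distrib]
  have h3 : ∑ z ∈ X, T q z a
      = (∑ v ∈ X, if v < a then tt q v a else 0)
        + ∑ v ∈ X, if a < v then tt q a v else 0 := by
    rw [← Finset.sum_add_distrib]
    refine Finset.sum_congr rfl (fun z hz => ?_)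
    rcases lt_trichotomy z a with h | h | h
    · rw [T_lt h, if_pos h, if_neg (by omega), add_zero]
    · exact absurd h (fun hh => ha (hh ▸ hz))
    · rw [T_gt h, if_neg (by omega), if_pos h, zero_add]
  rw [h3, Finset.sum_filter]
  ring

end Stmt11Aux

open Stmt11Aux in
/-- **Leg lengths of `q`-bars and the `q̄`-sign** (`q` odd). -/
theorem stmt_11 (q : ℕ) (hq : Odd q) (hq0 : 0 < q) :
    ∃ δ : Finset ℕ → ℤ, (∀ X, δ X = 1 ∨ δ X = -1) ∧
      -- type (a): replace a part `x > q` by `x - q`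
      (∀ (X : Finset ℕ) (x : ℕ), 0 ∉ X → x ∈ X → q < x → x - q ∉ X →
        (-1 : ℤ) ^ (X.filter (fun z => x - q < z ∧ z < x)).card
          = δ X * δ (insert (x - q) (X.erase x))) ∧
      -- type (b): delete a part equal to `q`
      (∀ X : Finset ℕ, 0 ∉ X → q ∈ X →
        (-1 : ℤ) ^ (X.filter (fun z => z < q)).card = δ X * δ (X.erase q)) ∧
      -- type (c): delete two parts `x > y` with `x + y = q`
      (∀ (X : Finset ℕ) (x y : ℕ), 0 ∉ X → x ∈ X → y ∈ X → y < x → x + y = q →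
        (-1 : ℤ) ^ ((X.filter (fun z => z < x)).card + (X.filter (fun z => z < y)).card)
          = δ X * δ ((X.erase x).erase y)) := by
  refine ⟨fun X => (-1) ^ (f q X), fun X => ?_, ?_, ?_, ?_⟩
  · rcases Nat.even_or_odd (f q X) with h | h
    · left; exact h.neg_one_pow
    · right; exact h.neg_one_pow
  · -- (a)
    intro X x h0 hx hqx hnot
    dsimp only
    set Y := X.erase x with hYdef
    have hxY : x ∉ Y := Finset.notMem_erase x X
    have hY : insert x Y = X := Finset.insert_erase hx
    have hxqY : x - q ∉ Y := fun h => hnot (Finset.mem_of_mem_erase h)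
    have hf1 : f q X = f q Y + ∑ z ∈ Y, T q z x := by
      rw [← hY]; exact f_insert q x Y hxY
    have hf2 : f q (insert (x - q) Y) = f q Y + ∑ z ∈ Y, T q z (x - q) :=
      f_insert _ _ _ hxqY
    have hfil : X.filter (fun z => x - q < z ∧ z < x)
        = Y.filter (fun z => x - q < z ∧ z < x) := by
      rw [hYdef]
      ext w
      simp only [Finset.mem_filter, Finset.mem_erase]
      constructor
      · rintro ⟨hw, h⟩; exact ⟨⟨by omega, hw⟩, h⟩
      · rintro ⟨⟨_, hw⟩, h⟩; exact ⟨hw, h⟩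
    have key : (-1 : ℤ) ^ (∑ z ∈ Y, (T q z x + T q z (x - q)))
        = (-1) ^ (∑ z ∈ Y, if x - q < z ∧ z < x then 1 else 0) :=
      pow_sum_congr _ _ _ (fun z hz =>
        pointA hq hq0 hqx (fun h => hxY (h ▸ hz)) (fun h => hxqY (h ▸ hz)))
    have hd : ∑ z ∈ Y, (T q z x + T q z (x - q))
        = (∑ z ∈ Y, T q z x) + ∑ z ∈ Y, T q z (x - q) := Finset.sum_add_distrib
    rw [hfil, Finset.card_filter, hf1, hf2, ← pow_add, ← key, hd]
    exact pow_par (by omega)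
  · -- (b)
    intro X h0 hqX
    dsimp only
    set Y := X.erase q with hYdef
    have hqY : q ∉ Y := Finset.notMem_erase q X
    have hY : insert q Y = X := Finset.insert_erase hqX
    have hf1 : f q X = f q Y + ∑ z ∈ Y, T q z q := by
      rw [← hY]; exact f_insert q q Y hqY
    have hS : ∑ z ∈ Y, T q z q = (Y.filter (fun z => z < q)).card := by
      rw [Finset.card_filter]
      refine Finset.sum_congr rfl (fun z hz => ?_)
      exact pointB hq0
        (Nat.pos_of_ne_zero (fun h => h0 (h ▸ Finset.mem_of_mem_erase hz)))
        (Finset.ne_of_mem_erase hz)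
    have hfil : X.filter (fun z => z < q) = Y.filter (fun z => z < q) := by
      rw [hYdef]
      ext w
      simp only [Finset.mem_filter, Finset.mem_erase]
      constructor
      · rintro ⟨hw, h⟩; exact ⟨⟨by omega, hw⟩, h⟩
      · rintro ⟨⟨_, hw⟩, h⟩; exact ⟨hw, h⟩
    rw [hfil, ← hS, hf1, ← pow_add]
    exact pow_par (by omega)
  · -- (c)
    intro X x y h0 hx hy hyx hxyq
    dsimp only
    have hy0 : 0 < y := Nat.pos_of_ne_zero (fun h => h0 (h ▸ hy))
    set Y := (X.erase x).erase y with hYdef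
    have hyY : y ∉ Y := Finset.notMem_erase _ _
    have hxY : x ∉ Y := fun h =>
      (Finset.notMem_erase x X) (Finset.mem_of_mem_erase h)
    have hyX' : y ∈ X.erase x := Finset.mem_erase.mpr ⟨by omega, hy⟩
    have h1 : insert y Y = X.erase x := Finset.insert_erase hyX'
    have h2 : insert x (X.erase x) = X := Finset.insert_erase hx
    have hxIns : x ∉ insert y Y := by rw [h1]; exact Finset.notMem_erase x X
    have hXeq : X = insert x (insert y Y) := by rw [h1, h2]
    have hf1 : f q X = f q (insert y Y) + ∑ z ∈ insert y Y, T q z x := by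
      rw [hXeq] ; exact f_insert _ _ _ hxIns
    have hf2 : f q (insert y Y) = f q Y + ∑ z ∈ Y, T q z y := f_insert _ _ _ hyY
    have hTsum : ∑ z ∈ insert y Y, T q z x = T q y x + ∑ z ∈ Y, T q z x :=
      Finset.sum_insert hyY
    have hx1 : (X.filter (fun z => z < x)).card
        = 1 + ∑ z ∈ Y, (if z < x then 1 else 0) := by
      rw [Finset.card_filter, hXeq, Finset.sum_insert hxIns, Finset.sum_insert hyY,
        if_neg (lt_irrefl x), if_pos hyx]
      omega
    have hy1 : (X.filter (fun z => z < y)).card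
        = ∑ z ∈ Y, (if z < y then 1 else 0) := by
      rw [Finset.card_filter, hXeq, Finset.sum_insert hxIns, Finset.sum_insert hyY,
        if_neg (show ¬ x < y by omega), if_neg (lt_irrefl y)]
      omega
    have key : (-1 : ℤ) ^ (∑ z ∈ Y, (T q z x + T q z y))
        = (-1) ^ (∑ z ∈ Y, ((if z < x then 1 else 0) + (if z < y then 1 else 0))) :=
      pow_sum_congr _ _ _ (fun z hz =>
        pointC2 hy0 hyx hxyq (fun h => hxY (h ▸ hz)) (fun h => hyY (h ▸ hz)))
    have hd : ∑ z ∈ Y, (T q z x + T q z y)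
        = (∑ z ∈ Y, T q z x) + ∑ z ∈ Y, T q z y := Finset.sum_add_distrib
    have hd2 : ∑ z ∈ Y, ((if z < x then 1 else 0) + (if z < y then 1 else 0))
        = (∑ z ∈ Y, if z < x then 1 else 0) + ∑ z ∈ Y, if z < y then 1 else 0 :=
      Finset.sum_add_distrib
    rw [hx1, hy1, hf1, hf2, hTsum, pointC1 hy0 hyx hxyq, ← pow_add]
    calc (-1 : ℤ) ^ ((1 + ∑ z ∈ Y, if z < x then 1 else 0) + ∑ z ∈ Y, if z < y then 1 else 0)
        = (-1) ^ (1 + ∑ z ∈ Y, ((if z < x then 1 else 0) + (if z < y then 1 else 0))) :=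
          pow_par (by omega)
      _ = (-1) ^ 1 * (-1) ^ (∑ z ∈ Y, ((if z < x then 1 else 0) + (if z < y then 1 else 0))) :=
          pow_add _ _ _
      _ = (-1) ^ 1 * (-1) ^ (∑ z ∈ Y, (T q z x + T q z y)) := by rw [key]
      _ = (-1) ^ (1 + ∑ z ∈ Y, (T q z x + T q z y)) := (pow_add _ _ _).symm
      _ = _ := pow_par (by omega)
end

section
/- Let U = U⁺ ⊕ U⁻, S, T be as above, and let ρ₁: H → GL(U) be a linear map such that ρ₁(x) maps U^ε to U^{ε·ε(x)} for a sign character ε: H → {±1} (i.e. ρ₁(x) preserves the decomposition if ε(x)=1 and swaps the summands if ε(x)=−1). Then for all x ∈ H: T ∘ (ρ₁(x) ⊗ 1) ∘ T^{-1} = S^{(1−ε(x))/2} ⊗ ρ₁(x) as maps on U ⊗ U. -/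
open TensorProduct

/-- Let `U = U⁺ ⊕ U⁻`, `S` the involution with eigenspaces `U^±`, and `T` the signed
swap on `U⊗U`.  Let `ρ₁ : H → GL(U)` be such that `ρ₁(x)` maps `U^ε` to `U^{ε·ε(x)}`
for a sign function `ε : H → {±1}`.  Then for all `x ∈ H`:
`T ∘ (ρ₁(x) ⊗ 1) ∘ T⁻¹ = S^((1-ε(x))/2) ⊗ ρ₁(x)` on `U ⊗ U`
(equivalently, since `T` is invertible, `T ∘ (ρ₁(x) ⊗ 1) = (S^((1-ε(x))/2) ⊗ ρ₁(x)) ∘ T`,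
where `S^0 = id` when `ε(x) = 1` and `S^1 = S` when `ε(x) = -1`). -/
theorem stmt_17 {U : Type*} [AddCommGroup U] [Module ℂ U]
    (Up Um : Submodule ℂ U) (hcompl : IsCompl Up Um)
    (S : U →ₗ[ℂ] U) (hSp : ∀ u ∈ Up, S u = u) (hSm : ∀ u ∈ Um, S u = -u)
    (T : U ⊗[ℂ] U →ₗ[ℂ] U ⊗[ℂ] U)
    (hTmm : ∀ u₁ ∈ Um, ∀ u₂ ∈ Um, T (u₁ ⊗ₜ[ℂ] u₂) = -(u₂ ⊗ₜ[ℂ] u₁))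
    (hTpp : ∀ u₁ ∈ Up, ∀ u₂ ∈ Up, T (u₁ ⊗ₜ[ℂ] u₂) = u₂ ⊗ₜ[ℂ] u₁)
    (hTpm : ∀ u₁ ∈ Up, ∀ u₂ ∈ Um, T (u₁ ⊗ₜ[ℂ] u₂) = u₂ ⊗ₜ[ℂ] u₁)
    (hTmp : ∀ u₁ ∈ Um, ∀ u₂ ∈ Up, T (u₁ ⊗ₜ[ℂ] u₂) = u₂ ⊗ₜ[ℂ] u₁)
    {H : Type*} (ρ₁ : H → U →ₗ[ℂ] U) (ε : H → ℤ)
    (hε : ∀ x, ε x = 1 ∨ ε x = -1)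
    (hρ₁ : ∀ x : H,
      (ε x = 1 → (∀ u ∈ Up, ρ₁ x u ∈ Up) ∧ (∀ u ∈ Um, ρ₁ x u ∈ Um)) ∧
      (ε x = -1 → (∀ u ∈ Up, ρ₁ x u ∈ Um) ∧ (∀ u ∈ Um, ρ₁ x u ∈ Up))) :
    ∀ x : H,
      T ∘ₗ TensorProduct.map (ρ₁ x) LinearMap.id
        = TensorProduct.map (if ε x = 1 then LinearMap.id else S) (ρ₁ x) ∘ₗ T := by
  intro x
  apply TensorProduct.ext'
  intro u v
  obtain ⟨p₁, m₁, hp₁, hm₁, hu⟩ := Submodule.codisjoint_iff_exists_add_eq.mp hcompl.codisjoint u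
  obtain ⟨p₂, m₂, hp₂, hm₂, hv⟩ := Submodule.codisjoint_iff_exists_add_eq.mp hcompl.codisjoint v
  subst hu hv
  simp only [LinearMap.comp_apply, TensorProduct.map_tmul, LinearMap.id_coe, id_eq,
    TensorProduct.add_tmul, TensorProduct.tmul_add, map_add]
  rcases hε x with h1 | h1
  · obtain ⟨hP, hM⟩ := (hρ₁ x).1 h1
    rw [if_pos h1]
    rw [hTpp _ (hP _ hp₁) _ hp₂, hTpm _ (hP _ hp₁) _ hm₂,
      hTmp _ (hM _ hm₁) _ hp₂, hTmm _ (hM _ hm₁) _ hm₂,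
      hTpp _ hp₁ _ hp₂, hTpm _ hp₁ _ hm₂, hTmp _ hm₁ _ hp₂, hTmm _ hm₁ _ hm₂]
    simp only [TensorProduct.tmul_neg, map_add, map_neg, TensorProduct.map_tmul,
      LinearMap.id_coe, id_eq]
  · obtain ⟨hP, hM⟩ := (hρ₁ x).2 h1
    rw [if_neg (by omega)]
    rw [hTmp _ (hP _ hp₁) _ hp₂, hTmm _ (hP _ hp₁) _ hm₂,
      hTpp _ (hM _ hm₁) _ hp₂, hTpm _ (hM _ hm₁) _ hm₂,
      hTpp _ hp₁ _ hp₂, hTpm _ hp₁ _ hm₂, hTmp _ hm₁ _ hp₂, hTmm _ hm₁ _ hm₂]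
    simp only [TensorProduct.tmul_neg, map_add, map_neg, TensorProduct.map_tmul,
      hSp _ hp₂, hSm _ hm₂, TensorProduct.neg_tmul]
    abel
end
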